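/- Let μ = ([m_{i,j}, M_{i,j}])_{i,j} be a p×q reduced interval matrix with p, q ≥ 2 and 0 ≤ m_{i,j} ≤ M_{i,j} for all i ∈ {1,…,p} and j ∈ {1,…,q}. There exists A ∈ μ with rank(A) = 1 if and only if, for every natural number h with 2 ≤ h ≤ 2^{min{p,q}−1}, for all (not necessarily distinct) indices i₁,…,i_h ∈ {1,…,p} and j₁,…,j_h ∈ {1,…,q}, and for every permutation σ of {1,…,h}, one has m_{i₁,j₁}·…·m_{i_h,j_h} ≤ M_{i₁,j_{σ(1)}}·…·M_{i_h,j_{σ(h)}}. -/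

import Mathlib

open Finset

private noncomputable def bfAux {c : ℕ} [Nonempty (Fin c)] (W : Fin c → Fin c → ℝ)
    (j0 : Fin c) : ℕ → Fin c → ℝ
  | 0 => fun j => if j = j0 then 1 else 0
  | n+1 => fun j => max (bfAux W j0 n j)
      (Finset.univ.sup' Finset.univ_nonempty fun j' => bfAux W j0 n j' * W j' j)

section bf
variable {c : ℕ} [Nonempty (Fin c)] (W : Fin c → Fin c → ℝ) (j0 : Fin c)

/-- walk product -/
private noncomputable def wkP (g : ℕ → Fin c) (n : ℕ) : ℝ :=
  ∏ t ∈ Finset.range n, W (g t) (g (t+1))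

private lemma wkP_pos (hW : ∀ a b, 0 < W a b) (g : ℕ → Fin c) (n : ℕ) : 0 < wkP W g n :=
  Finset.prod_pos fun t _ => hW _ _

private lemma bf_nonneg : ∀ n j, 0 ≤ bfAux W j0 n j := by
  intro n
  induction n with
  | zero => intro j; simp only [bfAux]; split <;> norm_num
  | succ n ih => intro j; exact le_trans (ih j) (le_max_left _ _)

private lemma bf_mono {n n' : ℕ} (h : n ≤ n') (j : Fin c) :
    bfAux W j0 n j ≤ bfAux W j0 n' j := by
  induction n' with
  | zero => simp_all
  | succ k ih =>
    rcases Nat.eq_or_lt_of_le h with rfl | h'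
    · exact le_rfl
    · exact le_trans (ih (Nat.lt_succ_iff.mp h')) (le_max_left _ _)

private lemma bf_step (n : ℕ) (j j' : Fin c) :
    bfAux W j0 n j' * W j' j ≤ bfAux W j0 (n+1) j :=
  le_trans (Finset.le_sup' (fun j'' => bfAux W j0 n j'' * W j'' j) (Finset.mem_univ j')) (le_max_right _ _)

private lemma bf_L1 (hW : ∀ a b, 0 < W a b) :
    ∀ n (g : ℕ → Fin c), g 0 = j0 → wkP W g n ≤ bfAux W j0 n (g n) := by
  intro n
  induction n with
  | zero => intro g hg; simp [wkP, bfAux, hg]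
  | succ n ih =>
    intro g hg
    have h1 : wkP W g (n+1) = wkP W g n * W (g n) (g (n+1)) := Finset.prod_range_succ _ _
    rw [h1]
    refine le_trans ?_ (bf_step W j0 n (g (n+1)) (g n))
    exact mul_le_mul_of_nonneg_right (ih g hg) (hW _ _).le

private lemma bf_L2 (hW : ∀ a b, 0 < W a b) :
    ∀ n j, bfAux W j0 n j ≤ 0 ∨
      ∃ k ≤ n, ∃ g : ℕ → Fin c, g 0 = j0 ∧ g k = j ∧ bfAux W j0 n j ≤ wkP W g k := by
  intro n
  induction n with
  | zero =>
    intro j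
    by_cases hj : j = j0
    · subst hj
      exact Or.inr ⟨0, le_rfl, fun _ => j, rfl, rfl, by simp [bfAux, wkP]⟩
    · exact Or.inl (by simp [bfAux, hj])
  | succ n ih =>
    intro j
    rcases le_total (Finset.univ.sup' Finset.univ_nonempty
        fun j' => bfAux W j0 n j' * W j' j) (bfAux W j0 n j) with hs | hs
    · have hmax : bfAux W j0 (n+1) j = bfAux W j0 n j := max_eq_left hs
      rcases ih j with h0 | ⟨k, hk, g, hg0, hgk, hP⟩
      · exact Or.inl (hmax ▸ h0)
      · exact Or.inr ⟨k, hk.trans (Nat.le_succ n), g, hg0, hgk, hmax ▸ hP⟩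
    · have hmax : bfAux W j0 (n+1) j = Finset.univ.sup' Finset.univ_nonempty
          fun j' => bfAux W j0 n j' * W j' j := max_eq_right hs
      obtain ⟨j', -, hj'⟩ := Finset.exists_mem_eq_sup' Finset.univ_nonempty
        fun j' => bfAux W j0 n j' * W j' j
      rcases ih j' with h0 | ⟨k, hk, g, hg0, hgk, hP⟩
      · refine Or.inl ?_
        rw [hmax, hj']
        exact mul_nonpos_of_nonpos_of_nonneg h0 (hW _ _).le
      · refine Or.inr ⟨k+1, Nat.succ_le_succ hk, fun t => if t ≤ k then g t else j,
          by simp [hg0, Nat.zero_le], by simp, ?_⟩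
        have hPeq : wkP W (fun t => if t ≤ k then g t else j) (k+1)
            = wkP W g k * W j' j := by
          rw [wkP, Finset.prod_range_succ]
          have : ∀ t ∈ Finset.range k, W (if t ≤ k then g t else j)
              (if t+1 ≤ k then g (t+1) else j) = W (g t) (g (t+1)) := by
            intro t ht
            have ht' := Finset.mem_range.mp ht
            rw [if_pos (by omega), if_pos (by omega)]
          rw [Finset.prod_congr rfl this]
          rw [if_pos le_rfl, if_neg (by omega), hgk, wkP]
        rw [hmax, hj', hPeq]
        exact mul_le_mul_of_nonneg_right hP (hW _ _).le

private lemma bf_claimA (hW : ∀ a b, 0 < W a b) (hc : 0 < c)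
    (hcyc : ∀ d, 0 < d → d ≤ c → ∀ g : ℕ → Fin c, g 0 = g d →
      ∏ t ∈ Finset.range d, W (g t) (g (t+1)) ≤ 1) :
    ∀ n (g : ℕ → Fin c), g 0 = j0 → wkP W g n ≤ bfAux W j0 (c-1) (g n) := by
  intro n
  induction n using Nat.strong_induction_on with
  | _ n ih =>
    intro g hg
    by_cases hn : n ≤ c - 1
    · exact le_trans (bf_L1 W j0 hW n g hg) (bf_mono W j0 hn (g n))
    · push_neg at hn
      have hnc : c ≤ n := by omega
      -- pigeonhole on the first c+1 vertices
      have hcard : Fintype.card (Fin c) < Fintype.card (Fin (c+1)) := by simp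
      obtain ⟨x, y, hxy, hgxy⟩ := Fintype.exists_ne_map_eq_of_card_lt
        (fun t : Fin (c+1) => g t.val) hcard
      obtain ⟨a, b, hab, hble, hgab⟩ : ∃ a b : ℕ, a < b ∧ b ≤ c ∧ g a = g b := by
        rcases lt_or_gt_of_ne (fun h => hxy (Fin.ext h) : (x:ℕ) ≠ y) with h | h
        · exact ⟨x, y, h, Nat.lt_succ_iff.mp y.isLt, hgxy⟩
        · exact ⟨y, x, h, Nat.lt_succ_iff.mp x.isLt, hgxy.symm⟩
      set d := b - a with hd
      have hd0 : 0 < d := by omega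
      have hdc : d ≤ c := by omega
      have hbad : a + d = b := by omega
      set g' : ℕ → Fin c := fun t => if t ≤ a then g t else g (t + d) with hg'
      have hshift : ∀ t, a ≤ t → g' t = g (t + d) := by
        intro t ht
        by_cases h : t ≤ a
        · have hta : t = a := le_antisymm h ht
          subst hta
          show (if t ≤ t then g t else g (t + d)) = g (t + d)
          rw [if_pos le_rfl, hbad, hgab]
        · show (if t ≤ a then g t else g (t + d)) = g (t + d)
          rw [if_neg h]
      have hfun : ∀ t : ℕ, t + 1 ≤ a → g' t = g t ∧ g' (t+1) = g (t+1) := by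
        intro t ht
        constructor
        · show (if t ≤ a then g t else g (t + d)) = g t
          rw [if_pos (by omega)]
        · show (if t + 1 ≤ a then g (t+1) else g (t + 1 + d)) = g (t+1)
          rw [if_pos ht]
      have hsplit : wkP W g n =
          (∏ t ∈ Finset.Ico 0 a, W (g t) (g (t+1))) *
          (∏ t ∈ Finset.Ico a b, W (g t) (g (t+1))) *
          (∏ t ∈ Finset.Ico b n, W (g t) (g (t+1))) := by
        rw [wkP, Finset.range_eq_Ico,
          ← Finset.prod_Ico_consecutive (fun t => W (g t) (g (t+1)))
            (Nat.zero_le b) (by omega : b ≤ n),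
          ← Finset.prod_Ico_consecutive (fun t => W (g t) (g (t+1)))
            (Nat.zero_le a) hab.le]
      have hsplit' : wkP W g' (n - d) =
          (∏ t ∈ Finset.Ico 0 a, W (g t) (g (t+1))) *
          (∏ t ∈ Finset.Ico b n, W (g t) (g (t+1))) := by
        rw [wkP, Finset.range_eq_Ico,
          ← Finset.prod_Ico_consecutive (fun t => W (g' t) (g' (t+1)))
            (Nat.zero_le a) (by omega : a ≤ n - d)]
        congr 1
        · refine Finset.prod_congr rfl fun t ht => ?_
          have ht' := (Finset.mem_Ico.mp ht).2
          obtain ⟨e1, e2⟩ := hfun t (by omega)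
          rw [e1, e2]
        · rw [Finset.prod_Ico_eq_prod_range, Finset.prod_Ico_eq_prod_range]
          have hnb : n - d - a = n - b := by omega
          rw [hnb]
          refine Finset.prod_congr rfl fun t ht => ?_
          rw [hshift (a + t) (Nat.le_add_right a t), hshift (a + t + 1) (by omega)]
          have e1 : a + t + d = b + t := by omega
          have e2 : a + t + 1 + d = b + t + 1 := by omega
          rw [e1, e2]
      have hcyc' : (∏ t ∈ Finset.Ico a b, W (g t) (g (t+1))) ≤ 1 := by
        have h2 := hcyc d hd0 hdc (fun t => g (a + t))
          (by simp only [Nat.add_zero, hbad, hgab])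
        have h3 : (∏ t ∈ Finset.Ico a b, W (g t) (g (t+1)))
            = ∏ t ∈ Finset.range (b - a), W (g (a+t)) (g (a+t+1)) :=
          Finset.prod_Ico_eq_prod_range _ a b
        rw [h3, ← hd]
        refine le_trans (le_of_eq (Finset.prod_congr rfl fun t _ => ?_)) h2
        have e : a + t + 1 = a + (t + 1) := by omega
        rw [e]
      have hX : (0:ℝ) < ∏ t ∈ Finset.Ico 0 a, W (g t) (g (t+1)) :=
        Finset.prod_pos fun t _ => hW _ _
      have hY : (0:ℝ) < ∏ t ∈ Finset.Ico b n, W (g t) (g (t+1)) :=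
        Finset.prod_pos fun t _ => hW _ _
      have hfact : wkP W g n ≤ wkP W g' (n - d) := by
        rw [hsplit, hsplit']
        calc ((∏ t ∈ Finset.Ico 0 a, W (g t) (g (t+1))) *
              (∏ t ∈ Finset.Ico a b, W (g t) (g (t+1)))) *
              (∏ t ∈ Finset.Ico b n, W (g t) (g (t+1)))
            = ((∏ t ∈ Finset.Ico 0 a, W (g t) (g (t+1))) *
              (∏ t ∈ Finset.Ico b n, W (g t) (g (t+1)))) *
              (∏ t ∈ Finset.Ico a b, W (g t) (g (t+1))) := by ring
          _ ≤ (∏ t ∈ Finset.Ico 0 a, W (g t) (g (t+1))) *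
              (∏ t ∈ Finset.Ico b n, W (g t) (g (t+1))) :=
            mul_le_of_le_one_right (mul_nonneg hX.le hY.le) hcyc'
      have hg'0 : g' 0 = j0 := by
        show (if 0 ≤ a then g 0 else g (0 + d)) = j0
        rw [if_pos (Nat.zero_le a), hg]
      have hend : g' (n - d) = g n := by
        rw [hshift (n - d) (by omega)]
        congr 1
        omega
      calc wkP W g n ≤ wkP W g' (n - d) := hfact
        _ ≤ bfAux W j0 (c-1) (g' (n - d)) := ih (n - d) (by omega) g' hg'0
        _ = bfAux W j0 (c-1) (g n) := by rw [hend]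

/-- The fixpoint/potential: `v` positive with `v j' * W j' j ≤ v j`. -/
private lemma bf_potential (hW : ∀ a b, 0 < W a b) (hc : 0 < c)
    (hcyc : ∀ d, 0 < d → d ≤ c → ∀ g : ℕ → Fin c, g 0 = g d →
      ∏ t ∈ Finset.range d, W (g t) (g (t+1)) ≤ 1) :
    ∃ v : Fin c → ℝ, (∀ j, 0 < v j) ∧ ∀ j' j, v j' * W j' j ≤ v j := by
  obtain ⟨j0⟩ := (inferInstance : Nonempty (Fin c))
  set v : Fin c → ℝ := bfAux W j0 (c-1) with hv
  have claimB : ∀ n j, bfAux W j0 n j ≤ v j := by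
    intro n j
    rcases bf_L2 W j0 hW n j with h0 | ⟨k, hk, g, hg0, hgk, hP⟩
    · exact le_trans h0 (bf_nonneg W j0 (c-1) j)
    · exact le_trans hP (hgk ▸ bf_claimA W j0 hW hc hcyc k g hg0)
  have hfix : ∀ j' j, v j' * W j' j ≤ v j := by
    intro j' j
    exact le_trans (bf_step W j0 (c-1) j j') (claimB (c-1+1) j)
  have hv0 : 1 ≤ v j0 := by
    have : bfAux W j0 0 j0 = 1 := by simp [bfAux]
    exact this ▸ bf_mono W j0 (Nat.zero_le _) j0
  refine ⟨v, fun j => ?_, hfix⟩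
  calc (0:ℝ) < 1 * W j0 j := by simpa using hW j0 j
    _ ≤ v j0 * W j0 j := mul_le_mul_of_nonneg_right hv0 (hW _ _).le
    _ ≤ v j := hfix j0 j

end bf

/-- Main feasibility lemma: under reducedness and the cycle condition (phrased via
permuted products for all lengths up to `c`), there is a positive rank-one factorization
within the bounds. -/
private lemma aux_main {r c : ℕ} (hr : 0 < r) (hc2 : 2 ≤ c)
    (m M : Matrix (Fin r) (Fin c) ℝ)
    (hm : ∀ i j, 0 ≤ m i j) (hle : ∀ i j, m i j ≤ M i j)
    (hrow : ∀ i, ∃ j, 0 < m i j) (hcol : ∀ j, ∃ i, 0 < m i j)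
    (HC : ∀ h : ℕ, 0 < h → h ≤ c →
        ∀ (iv : Fin h → Fin r) (jv : Fin h → Fin c) (σ : Equiv.Perm (Fin h)),
          ∏ t, m (iv t) (jv t) ≤ ∏ t, M (iv t) (jv (σ t))) :
    ∃ (u : Fin r → ℝ) (v : Fin c → ℝ), (∀ i, 0 < u i) ∧ (∀ j, 0 < v j) ∧
      ∀ i j, m i j ≤ u i * v j ∧ u i * v j ≤ M i j := by
  haveI : Nonempty (Fin r) := ⟨⟨0, hr⟩⟩
  haveI : Nonempty (Fin c) := ⟨⟨0, by omega⟩⟩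
  have hc : 0 < c := by omega
  -- all upper bounds are positive
  have hM : ∀ i j, 0 < M i j := by
    intro i j
    obtain ⟨j', hj'⟩ := hrow i
    obtain ⟨i', hi'⟩ := hcol j
    have h2 := HC 2 (by omega) hc2 ![i, i'] ![j', j] (Equiv.swap 0 1)
    rw [Fin.prod_univ_two, Fin.prod_univ_two] at h2
    simp only [Equiv.swap_apply_left, Equiv.swap_apply_right, Matrix.cons_val_zero,
      Matrix.cons_val_one, Matrix.head_cons] at h2
    have hpos : (0:ℝ) < m i j' * m i' j := mul_pos hj' hi'
    have hMM : (0:ℝ) < M i j * M i' j' := lt_of_lt_of_le hpos h2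
    have hM2 : 0 ≤ M i' j' := le_trans (hm i' j') (hle i' j')
    nlinarith [le_trans (hm i j) (hle i j)]
  -- the weighted digraph on columns
  set W : Fin c → Fin c → ℝ :=
    fun j j' => Finset.univ.sup' Finset.univ_nonempty (fun i => m i j' / M i j) with hWdef
  have hWle : ∀ i j j', m i j' / M i j ≤ W j j' := fun i j j' =>
    Finset.le_sup' (fun i => m i j' / M i j) (Finset.mem_univ i)
  have hWex : ∀ j j', ∃ i, W j j' = m i j' / M i j := by
    intro j j'
    obtain ⟨i, -, hi⟩ := Finset.exists_mem_eq_sup' Finset.univ_nonempty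
      (fun i => m i j' / M i j)
    exact ⟨i, hi⟩
  have hWpos : ∀ j j', 0 < W j j' := by
    intro j j'
    obtain ⟨i, hi⟩ := hcol j'
    exact lt_of_lt_of_le (div_pos hi (hM i j)) (hWle i j j')
  -- the cycle condition
  have hcyc : ∀ d, 0 < d → d ≤ c → ∀ g : ℕ → Fin c, g 0 = g d →
      ∏ t ∈ Finset.range d, W (g t) (g (t+1)) ≤ 1 := by
    intro d hd0 hdc g hgd
    choose iw hiw using fun t : Fin d => hWex (g t) (g (t.val+1))
    have hprod : ∏ t ∈ Finset.range d, W (g t) (g (t+1))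
        = ∏ t : Fin d, (m (iw t) (g (t.val+1)) / M (iw t) (g t.val)) := by
      rw [← Fin.prod_univ_eq_prod_range (fun t => W (g t) (g (t+1))) d]
      exact Finset.prod_congr rfl fun t _ => hiw t
    rw [hprod, Finset.prod_div_distrib]
    rw [div_le_one (Finset.prod_pos fun t _ => hM _ _)]
    -- apply the hypothesis with the inverse rotation
    have key := HC d hd0 hdc iw (fun t => g (t.val+1)) (finRotate d)⁻¹
    obtain ⟨d', rfl⟩ : ∃ d', d = d' + 1 := ⟨d - 1, by omega⟩
    refine le_trans key (le_of_eq (Finset.prod_congr rfl fun t _ => ?_))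
    congr 1
    have hts : t = (finRotate (d'+1))⁻¹ t + 1 := by
      conv_lhs => rw [← (Equiv.Perm.eq_inv_iff_eq.mp rfl : (finRotate (d'+1)) ((finRotate (d'+1))⁻¹ t) = t)]
      rw [finRotate_succ_apply]
    conv_rhs => rw [hts, Fin.val_add_one]
    by_cases hsl : (finRotate (d'+1))⁻¹ t = Fin.last d'
    · rw [if_pos hsl, hsl, Fin.val_last]
      exact hgd.symm
    · rw [if_neg hsl]
  obtain ⟨v, hvpos, hvfix⟩ := bf_potential W hWpos hc hcyc
  -- key pairwise inequality
  have hkey : ∀ i j j', v j * m i j' ≤ v j' * M i j := by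
    intro i j j'
    have h1 : v j * (m i j' / M i j) ≤ v j * W j j' :=
      mul_le_mul_of_nonneg_left (hWle i j j') (hvpos j).le
    have h2 := hvfix j j'
    have h3 : v j * (m i j' / M i j) ≤ v j' := le_trans h1 h2
    calc v j * m i j' = (v j * (m i j' / M i j)) * M i j := by
          rw [mul_assoc, div_mul_cancel₀ _ (hM i j).ne']
        _ ≤ v j' * M i j := mul_le_mul_of_nonneg_right h3 (hM i j).le
  -- define u
  set u : Fin r → ℝ :=
    fun i => Finset.univ.sup' Finset.univ_nonempty (fun j => m i j / v j) with hudef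
  have hule : ∀ i j, m i j / v j ≤ u i := fun i j =>
    Finset.le_sup' (fun j => m i j / v j) (Finset.mem_univ j)
  have hupos : ∀ i, 0 < u i := by
    intro i
    obtain ⟨j, hj⟩ := hrow i
    exact lt_of_lt_of_le (div_pos hj (hvpos j)) (hule i j)
  refine ⟨u, v, hupos, hvpos, fun i j => ⟨?_, ?_⟩⟩
  · have := hule i j
    rw [div_le_iff₀ (hvpos j)] at this
    exact this
  · have hub : u i ≤ M i j / v j := by
      rw [hudef]
      refine Finset.sup'_le _ _ fun j' _ => ?_
      rw [div_le_div_iff₀ (hvpos j') (hvpos j)]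
      calc m i j' * v j = v j * m i j' := mul_comm _ _
        _ ≤ v j' * M i j := hkey i j j'
        _ = M i j * v j' := mul_comm _ _
    calc u i * v j ≤ (M i j / v j) * v j := mul_le_mul_of_nonneg_right hub (hvpos j).le
      _ = M i j := div_mul_cancel₀ _ (hvpos j).ne'

private lemma rank_outer {p q : ℕ} (hp : 0 < p) (hq : 0 < q)
    (u : Fin p → ℝ) (v : Fin q → ℝ) (hu : ∀ i, 0 < u i) (hv : ∀ j, 0 < v j) :
    (Matrix.of fun i j => u i * v j).rank = 1 := by
  set A := Matrix.of fun (i : Fin p) (j : Fin q) => u i * v j with hA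
  have hmv : ∀ x : Fin q → ℝ, A.mulVecLin x = (∑ j, v j * x j) • u := by
    intro x
    ext i
    simp only [Matrix.mulVecLin_apply, Matrix.mulVec, dotProduct, Matrix.of_apply,
      Pi.smul_apply, smul_eq_mul, hA]
    rw [Finset.sum_mul]
    exact Finset.sum_congr rfl fun j _ => by ring
  have hune : u ≠ 0 := fun h => absurd (congrFun h ⟨0, hp⟩) (hu ⟨0, hp⟩).ne'
  have hrange : LinearMap.range A.mulVecLin = Submodule.span ℝ {u} := by
    apply le_antisymm
    · rintro _ ⟨x, rfl⟩
      rw [hmv]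
      exact Submodule.smul_mem _ _ (Submodule.mem_span_singleton_self u)
    · rw [Submodule.span_le, Set.singleton_subset_iff]
      refine ⟨(Pi.single (⟨0, hq⟩ : Fin q) ((v ⟨0, hq⟩)⁻¹) : Fin q → ℝ), ?_⟩
      rw [hmv]
      have : (∑ j, v j * (Pi.single (⟨0, hq⟩ : Fin q) ((v ⟨0, hq⟩)⁻¹) : Fin q → ℝ) j) = 1 := by
        simp only [Pi.single_apply, mul_ite, mul_zero]
        rw [Finset.sum_ite_eq' Finset.univ]
        simp [mul_inv_cancel₀ (hv ⟨0, hq⟩).ne']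
      rw [this, one_smul]
  rw [Matrix.rank, hrange, finrank_span_singleton hune]

/-- For a reduced p×q interval matrix (p, q ≥ 2) with nonnegative lower
bounds, μ contains a rank-one matrix iff, for every 2 ≤ h ≤ 2^(min p q - 1), all index
tuples i₁,…,i_h, j₁,…,j_h and every permutation σ of {1,…,h}, the product of the
corresponding minima is at most the product of the σ-permuted maxima. -/
theorem rank_one_iff_products (p q : ℕ) (hp : 2 ≤ p) (hq : 2 ≤ q)
    (m M : Matrix (Fin p) (Fin q) ℝ)
    (hm : ∀ i j, 0 ≤ m i j)
    (hle : ∀ i j, m i j ≤ M i j)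
    (hredrow : ∀ i, ∃ j, ¬ (m i j ≤ 0 ∧ 0 ≤ M i j))
    (hredcol : ∀ j, ∃ i, ¬ (m i j ≤ 0 ∧ 0 ≤ M i j)) :
    (∃ A : Matrix (Fin p) (Fin q) ℝ,
        (∀ i j, A i j ∈ Set.Icc (m i j) (M i j)) ∧ A.rank = 1) ↔
      ∀ h : ℕ, 2 ≤ h → h ≤ 2 ^ (min p q - 1) →
        ∀ (iv : Fin h → Fin p) (jv : Fin h → Fin q) (σ : Equiv.Perm (Fin h)),
          ∏ t, m (iv t) (jv t) ≤ ∏ t, M (iv t) (jv (σ t)) := by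
  constructor
  · rintro ⟨A, hAmem, hArank⟩ h hh2 hhb iv jv σ
    have hA0 : ∀ i j, 0 ≤ A i j := fun i j => le_trans (hm i j) (hAmem i j).1
    rw [Matrix.rank] at hArank
    rw [finrank_eq_one_iff'] at hArank
    obtain ⟨u0, hu0ne, hu0⟩ := hArank
    choose cc hcc using fun j =>
      hu0 ⟨A.mulVec (Pi.single j 1), LinearMap.mem_range.mpr ⟨Pi.single j 1, rfl⟩⟩
    have hAij : ∀ i j, A i j = cc j * (u0 : Fin p → ℝ) i := by
      intro i j
      have h1 := congrArg (fun z : LinearMap.range A.mulVecLin => (z : Fin p → ℝ) i) (hcc j)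
      simp only [SetLike.val_smul, Pi.smul_apply, smul_eq_mul, Matrix.mulVec_single,
        mul_one, Matrix.col_apply, MulOpposite.op_one, one_smul] at h1
      exact h1.symm
    calc ∏ t, m (iv t) (jv t) ≤ ∏ t, A (iv t) (jv t) :=
          Finset.prod_le_prod (fun t _ => hm _ _) (fun t _ => (hAmem _ _).1)
      _ = ∏ t, A (iv t) (jv (σ t)) := by
          simp only [hAij]
          rw [Finset.prod_mul_distrib, Finset.prod_mul_distrib]
          congr 1
          exact (Equiv.prod_comp σ fun t => cc (jv t)).symm
      _ ≤ ∏ t, M (iv t) (jv (σ t)) :=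
          Finset.prod_le_prod (fun t _ => hA0 _ _) (fun t _ => (hAmem _ _).2)
  · intro H
    have hb : ∀ n : ℕ, 1 ≤ n → n ≤ 2 ^ (n - 1) := by
      intro n hn
      calc n = (n-1) + 1 := by omega
        _ ≤ 2^(n-1) := Nat.succ_le_of_lt Nat.lt_two_pow_self
    have hrowpos : ∀ i, ∃ j, 0 < m i j := by
      intro i
      obtain ⟨j, hj⟩ := hredrow i
      rcases lt_or_ge 0 (m i j) with h | h
      · exact ⟨j, h⟩
      · exact absurd ⟨h, le_trans (hm i j) (hle i j)⟩ hj
    have hcolpos : ∀ j, ∃ i, 0 < m i j := by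
      intro j
      obtain ⟨i, hi⟩ := hredcol j
      rcases lt_or_ge 0 (m i j) with h | h
      · exact ⟨i, h⟩
      · exact absurd ⟨h, le_trans (hm i j) (hle i j)⟩ hi
    rcases le_total q p with hqp | hpq
    · -- q = min p q; columns are the small side
      have hcmin : min p q = q := min_eq_right hqp
      have HC : ∀ h : ℕ, 0 < h → h ≤ q →
          ∀ (iv : Fin h → Fin p) (jv : Fin h → Fin q) (σ : Equiv.Perm (Fin h)),
            ∏ t, m (iv t) (jv t) ≤ ∏ t, M (iv t) (jv (σ t)) := by
        intro h hh hhq iv jv σ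
        rcases Nat.lt_or_ge h 2 with h1 | h2
        · have hh1 : h = 1 := by omega
          subst hh1
          have hσ : ∀ t : Fin 1, σ t = t := fun t => Subsingleton.elim _ _
          calc ∏ t, m (iv t) (jv t) ≤ ∏ t, M (iv t) (jv t) :=
              Finset.prod_le_prod (fun t _ => hm _ _) (fun t _ => hle _ _)
            _ = ∏ t, M (iv t) (jv (σ t)) :=
              Finset.prod_congr rfl fun t _ => by rw [hσ t]
        · exact H h h2 (le_trans hhq (by rw [hcmin]; exact hb q (by omega))) iv jv σ
      obtain ⟨u, v, hupos, hvpos, huv⟩ := aux_main (by omega : 0 < p) hq m M hm hle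
        hrowpos hcolpos HC
      exact ⟨Matrix.of fun i j => u i * v j,
        fun i j => ⟨(huv i j).1, (huv i j).2⟩,
        rank_outer (by omega) (by omega) u v hupos hvpos⟩
    · -- p = min p q; rows are the small side: transpose
      have hcmin : min p q = p := min_eq_left hpq
      have HC : ∀ h : ℕ, 0 < h → h ≤ p →
          ∀ (iv : Fin h → Fin q) (jv : Fin h → Fin p) (σ : Equiv.Perm (Fin h)),
            ∏ t, (Matrix.of fun j i => m i j) (iv t) (jv t) ≤
              ∏ t, (Matrix.of fun j i => M i j) (iv t) (jv (σ t)) := by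
        intro h hh hhp iv jv σ
        simp only [Matrix.of_apply]
        rcases Nat.lt_or_ge h 2 with h1 | h2
        · have hh1 : h = 1 := by omega
          subst hh1
          have hσ : ∀ t : Fin 1, σ t = t := fun t => Subsingleton.elim _ _
          calc ∏ t, m (jv t) (iv t) ≤ ∏ t, M (jv t) (iv t) :=
              Finset.prod_le_prod (fun t _ => hm _ _) (fun t _ => hle _ _)
            _ = ∏ t, M (jv (σ t)) (iv t) :=
              Finset.prod_congr rfl fun t _ => by rw [hσ t]
        · have h0 := H h h2 (le_trans hhp (by rw [hcmin]; exact hb p (by omega))) jv iv σ⁻¹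
          have hre := Equiv.prod_comp σ (fun t => M (jv t) (iv (σ⁻¹ t)))
          calc ∏ t, m (jv t) (iv t) ≤ ∏ t, M (jv t) (iv (σ⁻¹ t)) := h0
            _ = ∏ t, M (jv (σ t)) (iv t) := by
                rw [← hre]
                exact Finset.prod_congr rfl fun t _ => by rw [(Equiv.Perm.inv_eq_iff_eq.mpr rfl : σ⁻¹ (σ t) = t)]
      obtain ⟨u, v, hupos, hvpos, huv⟩ := aux_main (by omega : 0 < q) hp
        (Matrix.of fun j i => m i j) (Matrix.of fun j i => M i j)
        (fun j i => hm i j) (fun j i => hle i j) hcolpos hrowpos HC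
      refine ⟨Matrix.of fun i j => v i * u j, fun i j => ?_, 
        rank_outer (by omega) (by omega) v u hvpos hupos⟩
      have h1 := (huv j i).1
      have h2 := (huv j i).2
      simp only [Matrix.of_apply] at h1 h2 ⊢
      constructor
      · calc m i j ≤ u j * v i := h1
          _ = v i * u j := mul_comm _ _
      · calc v i * u j = u j * v i := mul_comm _ _
          _ ≤ M i j := h2
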